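/- For every s > 0 there exists a constant c_s > 0 such that for all reals τ ≥ 0 and λ ≥ 0 satisfying |τ - λ^(1/s)| > 1, one has |τ^s - λ| ≥ c_s * (1 + λ)^(1 - 1/s). -/
import Mathlib

open Real

private lemma mul_self_rpow_aux {x s : ℝ} (hx : 0 ≤ x) (hs : s ≠ 0) :
    x * x ^ (s - 1) = x ^ s := by
  have h : x ^ ((1:ℝ) + (s - 1)) = x ^ (1:ℝ) * x ^ (s - 1) :=
    Real.rpow_add' hx (by rw [show (1:ℝ) + (s - 1) = s by ring]; exact hs)
  rw [show (1:ℝ) + (s - 1) = s by ring, Real.rpow_one] at h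
  exact h.symm

/-- concave MVT-type lower bound: for `0 < s ≤ 1`, `0 ≤ y ≤ x`, `0 < x`,
`s * x^(s-1) * (x - y) ≤ x^s - y^s`. -/
private lemma concave_mvt_aux {s x y : ℝ} (hs : 0 < s) (hs1 : s ≤ 1)
    (hy : 0 ≤ y) (hyx : y ≤ x) (hx : 0 < x) :
    s * x ^ (s - 1) * (x - y) ≤ x ^ s - y ^ s := by
  have ht0 : (0:ℝ) ≤ y / x := div_nonneg hy hx.le
  have hz : (-1 : ℝ) ≤ y / x - 1 := by linarith
  have hb := rpow_one_add_le_one_add_mul_self hz hs.le hs1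
  -- (1 + (y/x - 1))^s ≤ 1 + s*(y/x - 1)
  have h1 : (1 : ℝ) + (y / x - 1) = y / x := by ring
  rw [h1] at hb
  have hxs : (0:ℝ) < x ^ s := Real.rpow_pos_of_pos hx s
  have hys : y ^ s = (y / x) ^ s * x ^ s := by
    rw [← Real.mul_rpow (div_nonneg hy hx.le) hx.le, div_mul_cancel₀ _ hx.ne']
  have hmul : (y / x) ^ s * x ^ s ≤ (1 + s * (y / x - 1)) * x ^ s :=
    mul_le_mul_of_nonneg_right hb hxs.le
  have hxs1 : x ^ (s - 1) = x ^ s / x := Real.rpow_sub_one hx.ne' s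
  have hkey : (1 + s * (y / x - 1)) * x ^ s = x ^ s - s * (x ^ s / x) * (x - y) := by
    field_simp
    ring
  rw [hys]
  rw [hxs1]
  nlinarith [hmul, hkey]

/-- comparison: `(1 + μ^s)^(1 - 1/s) ≤ (1 + μ)^(s-1)` for `s > 0`, `μ ≥ 0`. -/
private lemma comp_aux {s μ : ℝ} (hs : 0 < s) (hμ : 0 ≤ μ) :
    (1 + μ ^ s) ^ (1 - 1 / s) ≤ (1 + μ) ^ (s - 1) := by
  have h1μ : (0:ℝ) < 1 + μ := by linarith
  have hpow : ((1 + μ) ^ s) ^ (1 - 1 / s) = (1 + μ) ^ (s - 1) := by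
    rw [← Real.rpow_mul h1μ.le]
    congr 1
    field_simp
  have hμs : 0 ≤ μ ^ s := Real.rpow_nonneg hμ s
  rcases le_or_gt 1 s with h1s | h1s
  · -- s ≥ 1 : 1 + μ^s ≤ (1+μ)^s
    have hA : 1 + μ ^ s ≤ (1 + μ) ^ s := by
      have e : (1 + μ) ^ s = (1 + μ) * (1 + μ) ^ (s - 1) := by
        rw [mul_self_rpow_aux h1μ.le hs.ne']
      have h1 : (1:ℝ) ≤ (1 + μ) ^ (s - 1) :=
        Real.one_le_rpow (by linarith) (by linarith)
      have h2 : μ ^ s ≤ μ * (1 + μ) ^ (s - 1) := by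
        rw [← mul_self_rpow_aux hμ hs.ne']
        exact mul_le_mul_of_nonneg_left
          (Real.rpow_le_rpow hμ (by linarith) (by linarith)) hμ
      nlinarith
    have hexp : 0 ≤ 1 - 1 / s := by
      have : 1 / s ≤ 1 := by
        rw [div_le_one hs]; exact h1s
      linarith
    calc (1 + μ ^ s) ^ (1 - 1 / s) ≤ ((1 + μ) ^ s) ^ (1 - 1 / s) :=
          Real.rpow_le_rpow (by linarith) hA hexp
      _ = (1 + μ) ^ (s - 1) := hpow
  · -- s < 1 : (1+μ)^s ≤ 1 + μ^s, negative exponent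
    have hB : (1 + μ) ^ s ≤ 1 + μ ^ s := by
      have e : (1 + μ) ^ s = (1 + μ) * (1 + μ) ^ (s - 1) := by
        rw [mul_self_rpow_aux h1μ.le hs.ne']
      have h1 : (1 + μ) ^ (s - 1) ≤ 1 :=
        Real.rpow_le_one_of_one_le_of_nonpos (by linarith) (by linarith)
      have h2 : μ * (1 + μ) ^ (s - 1) ≤ μ ^ s := by
        rcases eq_or_lt_of_le hμ with rfl | hμ'
        · simp [Real.zero_rpow hs.ne']
        · rw [← mul_self_rpow_aux hμ hs.ne']
          exact mul_le_mul_of_nonneg_left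
            (Real.rpow_le_rpow_of_nonpos hμ' (by linarith) (by linarith)) hμ
      nlinarith
    have hexp : 1 - 1 / s ≤ 0 := by
      have : 1 ≤ 1 / s := by
        rw [le_div_iff₀ hs]; linarith
      linarith
    calc (1 + μ ^ s) ^ (1 - 1 / s) ≤ ((1 + μ) ^ s) ^ (1 - 1 / s) :=
          Real.rpow_le_rpow_of_nonpos (Real.rpow_pos_of_pos h1μ s) hB hexp
      _ = (1 + μ) ^ (s - 1) := hpow

/-- key lemma in terms of `μ`. -/
private lemma key_aux (s : ℝ) (hs : 0 < s) :
    ∃ c : ℝ, 0 < c ∧ ∀ τ μ : ℝ, 0 ≤ τ → 0 ≤ μ → 1 < |τ - μ| →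
      c * (1 + μ) ^ (s - 1) ≤ |τ ^ s - μ ^ s| := by
  rcases le_or_gt 1 s with h1s | h1s
  · -- s ≥ 1, c = 2^(1-s)
    refine ⟨(2:ℝ) ^ (1 - s), Real.rpow_pos_of_pos two_pos _, ?_⟩
    intro τ μ hτ hμ habs
    have hc1 : (2:ℝ) ^ (1 - s) ≤ 1 :=
      Real.rpow_le_one_of_one_le_of_nonpos one_le_two (by linarith)
    have h1μ : (0:ℝ) < 1 + μ := by linarith
    have hpow1μ : (0:ℝ) < (1 + μ) ^ (s - 1) := Real.rpow_pos_of_pos h1μ _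
    rcases lt_or_ge τ μ with hlt | hle
    · -- μ ≥ τ + 1
      have hd : 1 < μ - τ := by
        have : |τ - μ| = μ - τ := by rw [abs_sub_comm]; exact abs_of_pos (by linarith)
        linarith [this ▸ habs]
      have hμ1 : (1:ℝ) ≤ μ := by linarith
      have hμpos : (0:ℝ) < μ := by linarith
      have hμ1' : (0:ℝ) ≤ μ - 1 := by linarith
      -- τ^s ≤ (μ-1)^s ≤ (μ-1) * μ^(s-1)
      have h2 : τ ^ s ≤ (μ - 1) ^ s := Real.rpow_le_rpow hτ (by linarith) hs.le
      have h3 : (μ - 1) ^ s ≤ (μ - 1) * μ ^ (s - 1) := by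
        rw [← mul_self_rpow_aux hμ1' hs.ne']
        exact mul_le_mul_of_nonneg_left
          (Real.rpow_le_rpow hμ1' (by linarith) (by linarith)) hμ1'
      have h4 : μ ^ s = μ * μ ^ (s - 1) := (mul_self_rpow_aux hμpos.le hs.ne').symm
      have h5 : μ ^ (s - 1) ≤ μ ^ s - τ ^ s := by nlinarith
      -- 2^(1-s) * (1+μ)^(s-1) ≤ μ^(s-1)
      have h6 : (1 + μ) ^ (s - 1) ≤ (2 * μ) ^ (s - 1) :=
        Real.rpow_le_rpow h1μ.le (by linarith) (by linarith)
      have h7 : (2 * μ) ^ (s - 1) = 2 ^ (s - 1) * μ ^ (s - 1) :=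
        Real.mul_rpow (by norm_num) hμpos.le
      have h8 : (2:ℝ) ^ (1 - s) * 2 ^ (s - 1) = 1 := by
        rw [← Real.rpow_add two_pos]
        norm_num
      have h9 : (2:ℝ) ^ (1 - s) * (1 + μ) ^ (s - 1) ≤ μ ^ (s - 1) := by
        calc (2:ℝ) ^ (1 - s) * (1 + μ) ^ (s - 1)
            ≤ (2:ℝ) ^ (1 - s) * (2 ^ (s - 1) * μ ^ (s - 1)) := by
              rw [← h7]
              exact mul_le_mul_of_nonneg_left h6 (Real.rpow_nonneg (by norm_num) _)
          _ = μ ^ (s - 1) := by rw [← mul_assoc, h8, one_mul]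
      have habs' : |τ ^ s - μ ^ s| = μ ^ s - τ ^ s := by
        rw [abs_sub_comm]
        have hμτ : τ ^ s ≤ μ ^ s := Real.rpow_le_rpow hτ hlt.le hs.le
        exact abs_of_nonneg (by linarith)
      rw [habs']
      linarith
    · -- τ ≥ μ + 1
      have hd : 1 < τ - μ := by
        have : |τ - μ| = τ - μ := abs_of_nonneg (by linarith)
        linarith [this ▸ habs]
      have h2 : (1 + μ) ^ s ≤ τ ^ s := Real.rpow_le_rpow h1μ.le (by linarith) hs.le
      have h3 : (1 + μ) ^ s = (1 + μ) * (1 + μ) ^ (s - 1) :=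
        (mul_self_rpow_aux h1μ.le hs.ne').symm
      have h4 : μ ^ s ≤ μ * (1 + μ) ^ (s - 1) := by
        rw [← mul_self_rpow_aux hμ hs.ne']
        exact mul_le_mul_of_nonneg_left
          (Real.rpow_le_rpow hμ (by linarith) (by linarith)) hμ
      have h5 : (1 + μ) ^ (s - 1) ≤ τ ^ s - μ ^ s := by nlinarith
      have habs' : |τ ^ s - μ ^ s| = τ ^ s - μ ^ s := by
        have : μ ^ s ≤ τ ^ s := Real.rpow_le_rpow hμ (by linarith) hs.le
        exact abs_of_nonneg (by linarith)
      rw [habs']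
      nlinarith
  · -- s < 1, c = s/2
    refine ⟨s / 2, by linarith, ?_⟩
    intro τ μ hτ hμ habs
    have h1μ : (0:ℝ) < 1 + μ := by linarith
    have hpow1μ : (0:ℝ) < (1 + μ) ^ (s - 1) := Real.rpow_pos_of_pos h1μ _
    have hpow1μ1 : (1 + μ) ^ (s - 1) ≤ 1 :=
      Real.rpow_le_one_of_one_le_of_nonpos (by linarith) (by linarith)
    rcases lt_or_ge τ μ with hlt | hle
    · -- μ ≥ τ + 1
      have hd : 1 < μ - τ := by
        have : |τ - μ| = μ - τ := by rw [abs_sub_comm]; exact abs_of_pos (by linarith)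
        linarith [this ▸ habs]
      have hμpos : (0:ℝ) < μ := by linarith
      have hmvt := concave_mvt_aux hs h1s.le hτ hlt.le hμpos
      have h2 : (1 + μ) ^ (s - 1) ≤ μ ^ (s - 1) :=
        Real.rpow_le_rpow_of_nonpos hμpos (by linarith) (by linarith)
      have habs' : |τ ^ s - μ ^ s| = μ ^ s - τ ^ s := by
        rw [abs_sub_comm]
        have hμτ : τ ^ s ≤ μ ^ s := Real.rpow_le_rpow hτ hlt.le hs.le
        exact abs_of_nonneg (by linarith)
      rw [habs']
      have hμs1 : (0:ℝ) < μ ^ (s - 1) := Real.rpow_pos_of_pos hμpos _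
      nlinarith [mul_le_mul_of_nonneg_left h2 hs.le,
        mul_le_mul_of_nonneg_left hd.le (mul_nonneg hs.le hμs1.le),
        mul_pos hs hpow1μ]
    · -- τ ≥ μ + 1
      have hd : 1 < τ - μ := by
        have : |τ - μ| = τ - μ := abs_of_nonneg (by linarith)
        linarith [this ▸ habs]
      have hτpos : (0:ℝ) < τ := by linarith
      have hmvt := concave_mvt_aux hs h1s.le hμ (by linarith) hτpos
      have habs' : |τ ^ s - μ ^ s| = τ ^ s - μ ^ s := by
        have : μ ^ s ≤ τ ^ s := Real.rpow_le_rpow hμ (by linarith) hs.le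
        exact abs_of_nonneg (by linarith)
      rw [habs']
      have hτs1 : (0:ℝ) < τ ^ (s - 1) := Real.rpow_pos_of_pos hτpos _
      rcases le_or_gt τ (2 * (1 + μ)) with hτ2 | hτ2
      · -- τ ≤ 2(1+μ)
        have h2 : (2 * (1 + μ)) ^ (s - 1) ≤ τ ^ (s - 1) :=
          Real.rpow_le_rpow_of_nonpos hτpos hτ2 (by linarith)
        have h3 : (2 * (1 + μ)) ^ (s - 1) = 2 ^ (s - 1) * (1 + μ) ^ (s - 1) :=
          Real.mul_rpow (by norm_num) h1μ.le
        have h4 : (1/2 : ℝ) ≤ (2:ℝ) ^ (s - 1) := by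
          have := Real.rpow_le_rpow_of_exponent_le (one_le_two)
            (show (-1:ℝ) ≤ s - 1 by linarith)
          rwa [Real.rpow_neg_one, show ((2:ℝ)⁻¹) = 1/2 by norm_num] at this
        have h5 : (1/2 : ℝ) * (1 + μ) ^ (s - 1) ≤ τ ^ (s - 1) := by
          calc (1/2 : ℝ) * (1 + μ) ^ (s - 1) ≤ 2 ^ (s - 1) * (1 + μ) ^ (s - 1) :=
                mul_le_mul_of_nonneg_right h4 hpow1μ.le
            _ = (2 * (1 + μ)) ^ (s - 1) := h3.symm
            _ ≤ τ ^ (s - 1) := h2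
        nlinarith [mul_le_mul_of_nonneg_left h5 hs.le,
          mul_le_mul_of_nonneg_left hd.le (mul_nonneg hs.le hτs1.le)]
      · -- τ > 2(1+μ)
        have hhalf : τ / 2 ≤ τ - μ := by linarith
        have hτ1 : (1:ℝ) ≤ τ := by linarith
        have hτs : (1:ℝ) ≤ τ ^ s := by
          calc (1:ℝ) = 1 ^ s := (Real.one_rpow s).symm
            _ ≤ τ ^ s := Real.rpow_le_rpow (by norm_num) hτ1 hs.le
        have hτss : τ ^ s = τ * τ ^ (s - 1) := (mul_self_rpow_aux hτpos.le hs.ne').symm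
        have h6 : s / 2 * (1 + μ) ^ (s - 1) ≤ s / 2 := by nlinarith
        have h7 : s / 2 ≤ s / 2 * τ ^ s := by nlinarith
        have h8 : s / 2 * τ ^ s ≤ s * τ ^ (s - 1) * (τ - μ) := by
          rw [hτss]
          nlinarith [mul_le_mul_of_nonneg_left hhalf (mul_nonneg hs.le hτs1.le)]
        linarith

theorem fractional_resolvent_lower_bound (s : ℝ) (hs : 0 < s) :
    ∃ c : ℝ, 0 < c ∧ ∀ τ lam : ℝ, 0 ≤ τ → 0 ≤ lam →
      |τ - lam ^ (1 / s)| > 1 →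
      c * (1 + lam) ^ (1 - 1 / s) ≤ |τ ^ s - lam| := by
  obtain ⟨c, hc, hkey⟩ := key_aux s hs
  refine ⟨c, hc, ?_⟩
  intro τ lam hτ hlam habs
  set μ := lam ^ (1 / s) with hμdef
  have hμ : 0 ≤ μ := Real.rpow_nonneg hlam _
  have hlamμ : μ ^ s = lam := by
    rw [hμdef, ← Real.rpow_mul hlam]
    rw [one_div_mul_cancel hs.ne', Real.rpow_one]
  have h1 := hkey τ μ hτ hμ habs
  rw [hlamμ] at h1
  have h2 : (1 + lam) ^ (1 - 1 / s) ≤ (1 + μ) ^ (s - 1) := by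
    rw [← hlamμ]
    exact comp_aux hs hμ
  calc c * (1 + lam) ^ (1 - 1 / s) ≤ c * (1 + μ) ^ (s - 1) :=
        mul_le_mul_of_nonneg_left h2 hc.le
    _ ≤ |τ ^ s - lam| := h1
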